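/- For every σ² ∈ (1,2), B_KL(σ²) < B_H(σ²), where B_KL(σ²) = √(exp(σ²-1) - σ²) and B_H(σ²) = (σ²-1)/√(2-σ²); hence there exist μ with B_KL(σ²) < |μ| < B_H(σ²) for which the KL divergence and relative Fisher divergence disagree on which of the two models N(μ,1) and N(0,μ²+σ²) is closer to N(μ,σ²). -/

import Mathlib

open MeasureTheory Real

/-- Density of a Normal distribution with mean `m` and variance `v`. -/
noncomputable def normalPDF (m v y : ℝ) : ℝ :=
  (Real.sqrt (2 * Real.pi * v))⁻¹ * Real.exp (-(y - m) ^ 2 / (2 * v))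

/-- Kullback-Leibler divergence between positive densities `p` and `q` on `ℝ`. -/
noncomputable def klDiv (p q : ℝ → ℝ) : ℝ := ∫ y : ℝ, p y * Real.log (p y / q y)

/-- Relative Fisher information divergence between positive densities `p` and `q`. -/
noncomputable def relFisher (p q : ℝ → ℝ) : ℝ :=
  ∫ y : ℝ, (deriv (fun w => Real.log (p w)) y - deriv (fun w => Real.log (q w)) y) ^ 2 * p y

/-- Boundary functions from the closed-form divergence differences. -/
noncomputable def BKL (v : ℝ) : ℝ := Real.sqrt (Real.exp (v - 1) - v)

noncomputable def BH (v : ℝ) : ℝ := (v - 1) / Real.sqrt (2 - v)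

section Aux
open Filter Asymptotics Topology

lemma tendsto_exp_neg_mul_sq_atTop' {b : ℝ} (hb : 0 < b) :
    Tendsto (fun x : ℝ => Real.exp (-b * x ^ 2)) atTop (𝓝 0) := by
  apply Real.tendsto_exp_atBot.comp
  exact (tendsto_pow_atTop two_ne_zero).const_mul_atTop_of_neg (neg_neg_of_pos hb) |>.congr (by intro x; ring)

lemma tendsto_pow_mul_exp_neg_mul_sq_atTop' {b : ℝ} (hb : 0 < b) (n : ℕ) :
    Tendsto (fun x : ℝ => x ^ n * Real.exp (-b * x ^ 2)) atTop (𝓝 0) := by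
  have h := rpow_mul_exp_neg_mul_sq_isLittleO_exp_neg hb (n : ℝ)
  have h2 : Tendsto (fun x : ℝ => Real.exp (-(1/2) * x)) atTop (𝓝 0) := by
    apply Real.tendsto_exp_atBot.comp
    exact tendsto_id.const_mul_atTop_of_neg (by norm_num)
  refine (h.isBigO.trans_tendsto h2).congr' ?_
  filter_upwards [eventually_gt_atTop 0] with x hx
  rw [Real.rpow_natCast]

lemma tendsto_pow_mul_exp_neg_mul_sq_atBot' {b : ℝ} (hb : 0 < b) (n : ℕ) :
    Tendsto (fun x : ℝ => x ^ n * Real.exp (-b * x ^ 2)) atBot (𝓝 0) := by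
  have h := (tendsto_pow_mul_exp_neg_mul_sq_atTop' hb n).comp tendsto_neg_atBot_atTop
  have habs : Tendsto (fun x : ℝ => (-x) ^ n * Real.exp (-b * x ^ 2)) atBot (𝓝 0) := by
    refine h.congr fun x => ?_
    simp [neg_sq]
  have := habs.neg
  rcases Nat.even_or_odd n with he | ho
  · refine habs.congr fun x => ?_
    rw [he.neg_pow]
  · rw [neg_zero] at this
    refine this.congr fun x => ?_
    rw [ho.neg_pow]; ring

/-- FTC: integral over ℝ of a derivative of a function vanishing at ±∞ is zero. -/
lemma integral_deriv_eq_zero' {f f' : ℝ → ℝ} (hd : ∀ x, HasDerivAt f (f' x) x)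
    (hi : Integrable f') (ht : Tendsto f atTop (𝓝 0)) (hb : Tendsto f atBot (𝓝 0)) :
    ∫ x : ℝ, f' x = 0 := by
  rw [← intervalIntegral.integral_Iic_add_Ioi (b := (0:ℝ)) hi.integrableOn hi.integrableOn,
    integral_Ioi_of_hasDerivAt_of_tendsto' (fun x _ => hd x) hi.integrableOn ht,
    integral_Iic_of_hasDerivAt_of_tendsto' (fun x _ => hd x) hi.integrableOn hb]
  ring

lemma integrable_sq_mul_exp_neg_mul_sq {b : ℝ} (hb : 0 < b) :
    Integrable (fun x : ℝ => x ^ 2 * Real.exp (-b * x ^ 2)) := by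
  have := integrable_rpow_mul_exp_neg_mul_sq hb (by norm_num : (-1:ℝ) < 2)
  have h2 : ((2:ℕ):ℝ) = (2:ℝ) := by norm_num
  rw [← h2] at this
  simp_rw [Real.rpow_natCast] at this
  exact this

lemma integral_mul_exp_neg_mul_sq_eq_zero {b : ℝ} (hb : 0 < b) :
    ∫ x : ℝ, x * Real.exp (-b * x ^ 2) = 0 := by
  have hd : ∀ x : ℝ, HasDerivAt (fun x : ℝ => -(2*b)⁻¹ * Real.exp (-b * x ^ 2))
      (x * Real.exp (-b * x ^ 2)) x := by
    intro x
    have h1 : HasDerivAt (fun x : ℝ => -b * x ^ 2) (-b * (2 * x)) x := by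
      simpa using ((hasDerivAt_pow 2 x).const_mul (-b))
    have := (h1.exp).const_mul (-(2*b)⁻¹)
    refine this.congr_deriv ?_
    field_simp
  refine integral_deriv_eq_zero' hd (integrable_mul_exp_neg_mul_sq hb) ?_ ?_
  · simpa using ((tendsto_exp_neg_mul_sq_atTop' hb).const_mul (-(2*b)⁻¹))
  · have h := ((tendsto_pow_mul_exp_neg_mul_sq_atBot' hb 0).const_mul (-(2*b)⁻¹))
    simpa using h

lemma integral_sq_mul_exp_neg_mul_sq {b : ℝ} (hb : 0 < b) :
    ∫ x : ℝ, x ^ 2 * Real.exp (-b * x ^ 2) = (2*b)⁻¹ * Real.sqrt (π / b) := by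
  have hd : ∀ x : ℝ, HasDerivAt (fun x : ℝ => x * Real.exp (-b * x ^ 2))
      (Real.exp (-b * x ^ 2) - 2 * b * (x ^ 2 * Real.exp (-b * x ^ 2))) x := by
    intro x
    have h1 : HasDerivAt (fun x : ℝ => -b * x ^ 2) (-b * (2 * x)) x := by
      simpa using ((hasDerivAt_pow 2 x).const_mul (-b))
    have := (hasDerivAt_id x).mul h1.exp
    simp only [id] at this
    refine this.congr_deriv ?_
    ring
  have hint : Integrable (fun x : ℝ =>
      Real.exp (-b * x ^ 2) - 2 * b * (x ^ 2 * Real.exp (-b * x ^ 2))) :=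
    (integrable_exp_neg_mul_sq hb).sub ((integrable_sq_mul_exp_neg_mul_sq hb).const_mul _)
  have h0 := integral_deriv_eq_zero' hd hint ?_ ?_
  · have hsplit := integral_sub (integrable_exp_neg_mul_sq hb)
      ((integrable_sq_mul_exp_neg_mul_sq hb).const_mul (2*b))
    rw [hsplit] at h0
    rw [integral_gaussian] at h0
    rw [integral_const_mul] at h0
    have hb' : (2:ℝ) * b ≠ 0 := by positivity
    field_simp at h0 ⊢
    linarith
  · simpa using tendsto_pow_mul_exp_neg_mul_sq_atTop' hb 1
  · simpa using tendsto_pow_mul_exp_neg_mul_sq_atBot' hb 1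

lemma integral_quadratic_mul_normalPDF (m v c0 c1 c2 : ℝ) (hv : 0 < v) :
    ∫ y : ℝ, (c0 + c1 * (y - m) + c2 * (y - m) ^ 2) * normalPDF m v y = c0 + c2 * v := by
  have hb : (0:ℝ) < (2*v)⁻¹ := by positivity
  set A : ℝ := (Real.sqrt (2 * Real.pi * v))⁻¹ with hA
  set F : ℝ → ℝ := fun t : ℝ => c0 * A * Real.exp (-(2*v)⁻¹ * t ^ 2)
          + c1 * A * (t * Real.exp (-(2*v)⁻¹ * t ^ 2))
          + c2 * A * (t ^ 2 * Real.exp (-(2*v)⁻¹ * t ^ 2)) with hF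
  have hexp : ∀ t : ℝ, Real.exp (-t ^ 2 / (2 * v)) = Real.exp (-(2*v)⁻¹ * t ^ 2) := by
    intro t; congr 1; field_simp
  have key : (fun y : ℝ => (c0 + c1 * (y - m) + c2 * (y - m) ^ 2) * normalPDF m v y)
      = fun y : ℝ => F (y - m) := by
    funext y
    simp only [hF, normalPDF, ← hA, hexp]
    ring
  rw [key]
  rw [integral_sub_right_eq_self (μ := volume) F m]
  simp only [hF]
  have i1 := integrable_exp_neg_mul_sq hb
  have i2 := integrable_mul_exp_neg_mul_sq hb
  have i3 := integrable_sq_mul_exp_neg_mul_sq hb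
  have ia : Integrable (fun x : ℝ => c0 * A * Real.exp (-(2*v)⁻¹ * x ^ 2)
      + c1 * A * (x * Real.exp (-(2*v)⁻¹ * x ^ 2))) volume :=
    (i1.const_mul _).add (i2.const_mul _)
  rw [integral_add ia (i3.const_mul _),
    integral_add (i1.const_mul _) (i2.const_mul _),
    integral_const_mul, integral_const_mul, integral_const_mul,
    integral_gaussian, integral_mul_exp_neg_mul_sq_eq_zero hb,
    integral_sq_mul_exp_neg_mul_sq hb]
  have hπ : Real.pi / (2*v)⁻¹ = 2 * Real.pi * v := by field_simp
  rw [hπ]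
  have hs : Real.sqrt (2 * Real.pi * v) > 0 := by
    apply Real.sqrt_pos.2; positivity
  have hof : ((2 * (2*v)⁻¹)⁻¹ : ℝ) = v := by field_simp
  rw [hof, hA]
  field_simp
  ring

lemma sqrt_two_pi_pos {b : ℝ} (hb : 0 < b) : 0 < Real.sqrt (2 * Real.pi * b) :=
  Real.sqrt_pos.2 (by positivity)

lemma normalPDF_pos (a b y : ℝ) (hb : 0 < b) : 0 < normalPDF a b y :=
  mul_pos (inv_pos.2 (sqrt_two_pi_pos hb)) (Real.exp_pos _)

lemma log_normalPDF (a b y : ℝ) (hb : 0 < b) :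
    Real.log (normalPDF a b y)
      = Real.log ((Real.sqrt (2 * Real.pi * b))⁻¹) + -(y - a) ^ 2 / (2 * b) := by
  rw [normalPDF, Real.log_mul (inv_ne_zero (sqrt_two_pi_pos hb).ne') (Real.exp_ne_zero _),
    Real.log_exp]

lemma deriv_log_normalPDF (a b : ℝ) (hb : 0 < b) (y : ℝ) :
    deriv (fun w => Real.log (normalPDF a b w)) y = -(y - a) / b := by
  have heq : (fun w => Real.log (normalPDF a b w))
      = fun w => Real.log ((Real.sqrt (2 * Real.pi * b))⁻¹) + -(w - a) ^ 2 / (2 * b) :=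
    funext fun w => log_normalPDF a b w hb
  rw [heq]
  have h1 : HasDerivAt (fun w : ℝ => (w - a) ^ 2) (2 * (y - a)) y := by
    refine (((hasDerivAt_id y).sub_const a).pow 2).congr_deriv ?_
    simp
  have h2 := ((h1.neg.div_const (2 * b)).const_add (Real.log ((Real.sqrt (2 * Real.pi * b))⁻¹)))
  erw [h2.deriv]
  field_simp

lemma klDiv_normal (m m2 v v2 : ℝ) (hv : 0 < v) (hv2 : 0 < v2) :
    klDiv (normalPDF m v) (normalPDF m2 v2)
      = (Real.log (v2 / v) + (v + (m - m2) ^ 2) / v2 - 1) / 2 := by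
  unfold klDiv
  have key : (fun y : ℝ => normalPDF m v y * Real.log (normalPDF m v y / normalPDF m2 v2 y))
      = fun y : ℝ =>
        ((Real.log ((Real.sqrt (2 * Real.pi * v))⁻¹)
            - Real.log ((Real.sqrt (2 * Real.pi * v2))⁻¹) + (m - m2) ^ 2 / (2 * v2))
          + ((m - m2) / v2) * (y - m)
          + (1 / (2 * v2) - 1 / (2 * v)) * (y - m) ^ 2) * normalPDF m v y := by
    funext y
    rw [Real.log_div (normalPDF_pos m v y hv).ne' (normalPDF_pos m2 v2 y hv2).ne',
      log_normalPDF m v y hv, log_normalPDF m2 v2 y hv2]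
    field_simp
    ring
  rw [key, integral_quadratic_mul_normalPDF _ _ _ _ _ hv]
  rw [Real.log_inv, Real.log_inv, Real.log_sqrt (by positivity), Real.log_sqrt (by positivity),
    Real.log_div hv2.ne' hv.ne', Real.log_mul (by positivity) hv.ne',
    Real.log_mul (by positivity) hv2.ne']
  field_simp
  ring

lemma relFisher_normal (m m2 v v2 : ℝ) (hv : 0 < v) (hv2 : 0 < v2) :
    relFisher (normalPDF m v) (normalPDF m2 v2)
      = (m - m2) ^ 2 / v2 ^ 2 + v * (1 / v2 - 1 / v) ^ 2 := by
  unfold relFisher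
  have key : (fun y : ℝ =>
      (deriv (fun w => Real.log (normalPDF m v w)) y
        - deriv (fun w => Real.log (normalPDF m2 v2 w)) y) ^ 2 * normalPDF m v y)
      = fun y : ℝ =>
        ((m - m2) ^ 2 / v2 ^ 2
          + (2 * (1 / v2 - 1 / v) * ((m - m2) / v2)) * (y - m)
          + ((1 / v2 - 1 / v) ^ 2) * (y - m) ^ 2) * normalPDF m v y := by
    funext y
    rw [deriv_log_normalPDF m v hv y, deriv_log_normalPDF m2 v2 hv2 y]
    have : -(y - m) / v - -(y - m2) / v2 = (1 / v2 - 1 / v) * (y - m) + (m - m2) / v2 := by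
      field_simp
      ring
    rw [this]
    ring
  rw [key, integral_quadratic_mul_normalPDF _ _ _ _ _ hv]
  ring

end Aux

/-- For `σ² ∈ (1,2)` we have `B_KL(σ²) < B_H(σ²)`, hence there exist means `μ` with
`B_KL(σ²) < |μ| < B_H(σ²)` for which KL prefers `N(μ,1)` while the relative Fisher
divergence prefers `N(0,μ²+σ²)` as an approximation of `N(μ,σ²)`. -/
theorem disagreement_region (v : ℝ) (hv1 : 1 < v) (hv2 : v < 2) :
    BKL v < BH v ∧
      ∃ μ : ℝ, BKL v < |μ| ∧ |μ| < BH v ∧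
        klDiv (normalPDF μ v) (normalPDF 0 (μ ^ 2 + v)) >
          klDiv (normalPDF μ v) (normalPDF μ 1) ∧
        relFisher (normalPDF μ v) (normalPDF 0 (μ ^ 2 + v)) <
          relFisher (normalPDF μ v) (normalPDF μ 1) := by
  have hv0 : (0:ℝ) < v := by linarith
  have h2v : (0:ℝ) < 2 - v := by linarith
  have hBH : 0 < BH v := div_pos (by linarith) (Real.sqrt_pos.2 h2v)
  have hBHsq : BH v ^ 2 = (v - 1) ^ 2 / (2 - v) := by
    rw [BH, div_pow, Real.sq_sqrt h2v.le]
  -- key exponential inequality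
  have hexp1 : (2 - v) * Real.exp (v - 1) < 1 := by
    have h := Real.add_one_lt_exp (x := -(v - 1)) (by intro h; apply absurd h; simp; linarith)
    have h2 : 2 - v < Real.exp (-(v - 1)) := by linarith
    have := mul_lt_mul_of_pos_right h2 (Real.exp_pos (v - 1))
    rwa [← Real.exp_add, neg_add_cancel, Real.exp_zero] at this
  have hBKLBH : BKL v < BH v := by
    rw [BKL, Real.sqrt_lt' hBH, hBHsq, lt_div_iff₀ h2v]
    nlinarith [Real.exp_pos (v - 1)]
  refine ⟨hBKLBH, ?_⟩
  set μ := (BKL v + BH v) / 2 with hμ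
  have hBKL0 : 0 ≤ BKL v := Real.sqrt_nonneg _
  have hμ0 : 0 < μ := by rw [hμ]; linarith
  have habs : |μ| = μ := abs_of_pos hμ0
  have h1 : BKL v < μ := by rw [hμ]; linarith
  have h2 : μ < BH v := by rw [hμ]; linarith
  have hw : (0:ℝ) < μ ^ 2 + v := by positivity
  refine ⟨μ, by rwa [habs], by rwa [habs], ?_, ?_⟩
  · -- KL comparison
    rw [klDiv_normal μ 0 v (μ^2+v) hv0 hw, klDiv_normal μ μ v 1 hv0 one_pos]
    have hμsq : Real.exp (v - 1) - v < μ ^ 2 := by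
      have := (Real.sqrt_lt' hμ0).mp (by rw [← BKL]; exact h1)
      exact this
    have hlog : v - 1 < Real.log (μ ^ 2 + v) := by
      rw [Real.lt_log_iff_exp_lt hw]; linarith
    have e1 : (v + (μ - 0) ^ 2) / (μ ^ 2 + v) = 1 := by
      rw [div_eq_one_iff_eq hw.ne']; ring
    rw [e1, Real.log_div hw.ne' hv0.ne', Real.log_div one_ne_zero hv0.ne', Real.log_one]
    have : (μ - μ) ^ 2 = 0 := by ring
    rw [this]
    have h1v : (v + 0) / 1 = v := by ring
    rw [h1v]
    linarith
  · -- Fisher comparison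
    rw [relFisher_normal μ 0 v (μ^2+v) hv0 hw, relFisher_normal μ μ v 1 hv0 one_pos]
    have hμsq : μ ^ 2 < (v - 1) ^ 2 / (2 - v) := by
      rw [← hBHsq]
      exact pow_lt_pow_left₀ h2 hμ0.le two_ne_zero
    have hμ2v : μ ^ 2 * (2 - v) < (v - 1) ^ 2 := (lt_div_iff₀ h2v).mp hμsq
    have e2 : (μ - 0) ^ 2 / (μ ^ 2 + v) ^ 2 + v * (1 / (μ ^ 2 + v) - 1 / v) ^ 2
        = μ ^ 2 / (v * (μ ^ 2 + v)) := by
      field_simp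
      ring
    have e1 : (μ - μ) ^ 2 / 1 ^ 2 + v * (1 / 1 - 1 / v) ^ 2 = (v - 1) ^ 2 / v := by
      field_simp
      ring
    rw [e2, e1, div_lt_div_iff₀ (by positivity) hv0]
    nlinarith [mul_lt_mul_of_pos_left hμ2v (mul_pos hv0 hv0), sq_nonneg μ, sq_nonneg ((v-1)*μ)]
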